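/- Let ε ∈ [0,1]. Then for every x ∈ (0, π), x·((1 − √ε)/(2·sin²(x/2)))^{1/(x·cot(x/2))} ≤ arccos(√ε). Moreover, if ε < 1, then at x = arccos(√ε) the left-hand side equals arccos(√ε), so the supremum of the left-hand side over x ∈ (0, π) equals arccos(√ε) and is attained at x = arccos(√ε). -/

import Mathlib

open Real Set

noncomputable def hfun (x : ℝ) : ℝ := x * Real.sin x / (1 - Real.cos x)

lemma two_sin_sq_half (x : ℝ) : 2 * Real.sin (x / 2) ^ 2 = 1 - Real.cos x := by
  have := Real.sin_sq_eq_half_sub (x / 2)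
  rw [show 2 * (x/2) = x by ring] at this
  linarith

lemma one_sub_cos_pos {x : ℝ} (hx : x ∈ Set.Ioo (0:ℝ) Real.pi) : 0 < 1 - Real.cos x := by
  rw [← two_sin_sq_half]
  have h : 0 < Real.sin (x/2) := Real.sin_pos_of_pos_of_lt_pi (by linarith [hx.1]) (by linarith [hx.2, Real.pi_pos])
  positivity

lemma hfun_deriv {x : ℝ} (hx : x ∈ Set.Ioo (0:ℝ) Real.pi) :
    HasDerivAt hfun ((Real.sin x - x) / (1 - Real.cos x)) x := by
  have hne : (1 : ℝ) - Real.cos x ≠ 0 := (one_sub_cos_pos hx).ne'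
  have h1 : HasDerivAt (fun y => y * Real.sin y) (Real.sin x + x * Real.cos x) x := by
    simpa [add_comm] using (hasDerivAt_id' x).fun_mul (Real.hasDerivAt_sin x)
  have h2 : HasDerivAt (fun y => 1 - Real.cos y) (Real.sin x) x := by
    simpa using (hasDerivAt_const x (1:ℝ)).fun_sub (Real.hasDerivAt_cos x)
  have := h1.fun_div h2 hne
  refine this.congr_deriv ?_
  have hpyth := Real.sin_sq_add_cos_sq x
  rw [div_eq_div_iff (pow_ne_zero 2 hne) hne]
  linear_combination (x * Real.cos x - x) * hpyth

lemma hfun_anti : AntitoneOn hfun (Set.Ioo (0:ℝ) Real.pi) := by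
  have : StrictAntiOn hfun (Set.Ioo (0:ℝ) Real.pi) := by
    apply strictAntiOn_of_deriv_neg (convex_Ioo _ _)
    · intro y hy
      exact (hfun_deriv hy).differentiableAt.continuousAt.continuousWithinAt
    · intro y hy
      rw [interior_Ioo] at hy
      rw [(hfun_deriv hy).deriv]
      have h1 : Real.sin y < y := Real.sin_lt hy.1
      exact div_neg_of_neg_of_pos (by linarith) (one_sub_cos_pos hy)
  exact this.antitoneOn

noncomputable def psifun (u : ℝ) : ℝ := Real.log (1 - Real.cos (Real.exp u))

lemma psifun_deriv {u : ℝ} (hu : Real.exp u < Real.pi) :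
    HasDerivAt psifun (hfun (Real.exp u)) u := by
  have hmem : Real.exp u ∈ Set.Ioo (0:ℝ) Real.pi := ⟨Real.exp_pos u, hu⟩
  have hne : (1 : ℝ) - Real.cos (Real.exp u) ≠ 0 := (one_sub_cos_pos hmem).ne'
  have h2 : HasDerivAt (fun v => 1 - Real.cos (Real.exp v))
      (Real.sin (Real.exp u) * Real.exp u) u := by
    have := (Real.hasDerivAt_cos (Real.exp u)).comp u (Real.hasDerivAt_exp u)
    simpa using (hasDerivAt_const u (1:ℝ)).fun_sub this
  have := h2.log hne
  convert this using 1
  · rfl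
  unfold hfun
  ring

/-- tangent-line inequality for the concave function `psifun`. -/
lemma psifun_key {u a : ℝ} (hu : Real.exp u < Real.pi) (ha : Real.exp a < Real.pi) :
    psifun a ≤ psifun u + hfun (Real.exp u) * (a - u) := by
  rcases lt_trichotomy u a with h | h | h
  · obtain ⟨c, hc, hslope⟩ := exists_hasDerivAt_eq_slope psifun
      (fun v => hfun (Real.exp v)) h
      (fun y hy => by
        have : Real.exp y < Real.pi :=
          lt_of_le_of_lt (Real.exp_le_exp.2 hy.2) ha
        exact (psifun_deriv this).differentiableAt.continuousAt.continuousWithinAt)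
      (fun y hy => psifun_deriv (lt_of_le_of_lt (Real.exp_le_exp.2 hy.2.le) ha))
    have hcu : Real.exp u < Real.exp c := Real.exp_lt_exp.2 hc.1
    have hca : Real.exp c < Real.pi := lt_of_le_of_lt (Real.exp_le_exp.2 hc.2.le) ha
    have hmono : hfun (Real.exp c) ≤ hfun (Real.exp u) :=
      hfun_anti ⟨Real.exp_pos u, hu⟩ ⟨Real.exp_pos c, hca⟩ hcu.le
    rw [eq_div_iff (sub_ne_zero.2 h.ne')] at hslope
    nlinarith [hslope, hmono]
  · simp [h]
  · obtain ⟨c, hc, hslope⟩ := exists_hasDerivAt_eq_slope psifun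
      (fun v => hfun (Real.exp v)) h
      (fun y hy => by
        have : Real.exp y < Real.pi :=
          lt_of_le_of_lt (Real.exp_le_exp.2 hy.2) hu
        exact (psifun_deriv this).differentiableAt.continuousAt.continuousWithinAt)
      (fun y hy => psifun_deriv (lt_of_le_of_lt (Real.exp_le_exp.2 hy.2.le) hu))
    have hcu : Real.exp c < Real.exp u := Real.exp_lt_exp.2 hc.2
    have hca : Real.exp a < Real.exp c := Real.exp_lt_exp.2 hc.1
    have hcp : Real.exp c < Real.pi := lt_of_le_of_lt (Real.exp_le_exp.2 hc.2.le) hu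
    have hmono : hfun (Real.exp u) ≤ hfun (Real.exp c) :=
      hfun_anti ⟨Real.exp_pos c, hcp⟩ ⟨Real.exp_pos u, hu⟩ hcu.le
    rw [eq_div_iff (sub_ne_zero.2 h.ne')] at hslope
    nlinarith [hslope, hmono]

/-- The function `x ↦ x·((1 − √ε)/(2·sin²(x/2)))^{1/(x·cot(x/2))}`. -/
noncomputable def Lfun (ε x : ℝ) : ℝ :=
  x * ((1 - Real.sqrt ε) / (2 * Real.sin (x / 2) ^ 2)) ^
    (1 / (x * (Real.cos (x / 2) / Real.sin (x / 2))))

theorem stmt10 (ε : ℝ) (hε : ε ∈ Set.Icc (0 : ℝ) 1) :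
    (∀ x ∈ Set.Ioo (0 : ℝ) Real.pi, Lfun ε x ≤ Real.arccos (Real.sqrt ε)) ∧
    (ε < 1 → Lfun ε (Real.arccos (Real.sqrt ε)) = Real.arccos (Real.sqrt ε)) ∧
    (ε < 1 →
      IsGreatest (Lfun ε '' Set.Ioo (0 : ℝ) Real.pi) (Real.arccos (Real.sqrt ε))) := by
  obtain ⟨hε0, hε1⟩ := hε
  set s := Real.sqrt ε with hs
  have hs0 : 0 ≤ s := Real.sqrt_nonneg ε
  have hs1 : s ≤ 1 := by
    rw [hs, show (1:ℝ) = Real.sqrt 1 by simp]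
    exact Real.sqrt_le_sqrt hε1
  set A := Real.arccos s with hA
  have hcosA : Real.cos A = s := Real.cos_arccos (by linarith) hs1
  -- main inequality
  have main : ∀ x ∈ Set.Ioo (0 : ℝ) Real.pi, Lfun ε x ≤ A := by
    intro x hx
    have hx0 := hx.1
    have hxpi := hx.2
    have hsinh : 0 < Real.sin (x/2) :=
      Real.sin_pos_of_pos_of_lt_pi (by linarith) (by linarith [Real.pi_pos])
    have hcosh : 0 < Real.cos (x/2) :=
      Real.cos_pos_of_mem_Ioo ⟨by linarith [Real.pi_pos], by linarith⟩
    have hc : 0 < x * (Real.cos (x/2) / Real.sin (x/2)) := by positivity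
    have h2s : 0 < 2 * Real.sin (x/2) ^ 2 := by positivity
    have hident : 2 * Real.sin (x/2) ^ 2 = 1 - Real.cos x := two_sin_sq_half x
    by_cases hslt : s < 1
    · -- s < 1
      have hA0 : 0 < A := Real.arccos_pos.2 hslt
      have hApi : A < Real.pi := lt_of_le_of_lt (Real.arccos_le_pi_div_two.2 hs0)
        (by linarith [Real.pi_pos])
      have hb : 0 < (1 - s) / (2 * Real.sin (x/2) ^ 2) := by
        apply div_pos (by linarith) h2s
      -- hfun x = x * cot(x/2)
      have hsinx : Real.sin x = 2 * Real.sin (x/2) * Real.cos (x/2) := by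
        have := Real.sin_two_mul (x/2)
        rw [show 2 * (x/2) = x by ring] at this
        linarith
      have hhfx : hfun x = x * (Real.cos (x/2) / Real.sin (x/2)) := by
        unfold hfun
        rw [← hident, hsinx]
        field_simp
      have key := psifun_key (u := Real.log x) (a := Real.log A)
        (by rwa [Real.exp_log hx0]) (by rwa [Real.exp_log hA0])
      rw [Real.exp_log hx0] at key
      unfold psifun at key
      rw [Real.exp_log hx0, Real.exp_log hA0, hcosA] at key
      -- key : log (1 - s) ≤ log (1 - cos x) + hfun x * (log A - log x)
      have hlogb : Real.log ((1 - s) / (2 * Real.sin (x/2) ^ 2))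
          = Real.log (1 - s) - Real.log (1 - Real.cos x) := by
        rw [Real.log_div (by linarith) h2s.ne', hident]
      have step : Real.log ((1 - s) / (2 * Real.sin (x/2) ^ 2))
          ≤ hfun x * (Real.log A - Real.log x) := by
        rw [hlogb]; linarith
      have step2 : (1 / (x * (Real.cos (x/2) / Real.sin (x/2)))) *
          Real.log ((1 - s) / (2 * Real.sin (x/2) ^ 2))
          ≤ Real.log A - Real.log x := by
        rw [← hhfx] at hc ⊢
        rw [div_mul_eq_mul_div, one_mul, div_le_iff₀ hc]
        calc Real.log ((1 - s) / (2 * Real.sin (x/2) ^ 2))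
            ≤ hfun x * (Real.log A - Real.log x) := step
          _ = (Real.log A - Real.log x) * hfun x := by ring
      have hLpos : 0 < Lfun ε x := by
        unfold Lfun
        rw [← hs]
        have := Real.rpow_pos_of_pos hb (1 / (x * (Real.cos (x/2) / Real.sin (x/2))))
        positivity
      have hlog : Real.log (Lfun ε x) ≤ Real.log A := by
        unfold Lfun
        rw [← hs, Real.log_mul hx0.ne' (Real.rpow_pos_of_pos hb _).ne',
          Real.log_rpow hb]
        linarith [step2]
      calc Lfun ε x = Real.exp (Real.log (Lfun ε x)) := (Real.exp_log hLpos).symm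
        _ ≤ Real.exp (Real.log A) := Real.exp_le_exp.2 hlog
        _ = A := Real.exp_log hA0
    · -- s = 1
      have hseq : s = 1 := le_antisymm hs1 (not_lt.1 hslt)
      have hA0 : A = 0 := by rw [hA, hseq, Real.arccos_one]
      unfold Lfun
      rw [hA0, ← hs, hseq]
      simp only [sub_self, zero_div]
      rw [Real.zero_rpow (by positivity), mul_zero]
  refine ⟨main, ?_, ?_⟩
  · intro hε1'
    have hslt : s < 1 := by
      rw [hs]
      nlinarith [Real.sq_sqrt hε0, Real.sqrt_nonneg ε]
    have hA0 : 0 < A := Real.arccos_pos.2 hslt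
    have hApi2 : A ≤ Real.pi / 2 := Real.arccos_le_pi_div_two.2 hs0
    have hident : 2 * Real.sin (A/2) ^ 2 = 1 - Real.cos A := two_sin_sq_half A
    unfold Lfun
    rw [show (1 - Real.sqrt ε) / (2 * Real.sin (A / 2) ^ 2) = 1 by
      rw [hident, hcosA, ← hs]
      exact div_self (by linarith)]
    rw [Real.one_rpow, mul_one]
  · intro hε1'
    have hslt : s < 1 := by
      rw [hs]
      nlinarith [Real.sq_sqrt hε0, Real.sqrt_nonneg ε]
    have hA0 : 0 < A := Real.arccos_pos.2 hslt
    have hApi : A < Real.pi := lt_of_le_of_lt (Real.arccos_le_pi_div_two.2 hs0)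
      (by linarith [Real.pi_pos])
    constructor
    · refine ⟨A, ⟨hA0, hApi⟩, ?_⟩
      have hident : 2 * Real.sin (A/2) ^ 2 = 1 - Real.cos A := two_sin_sq_half A
      unfold Lfun
      rw [show (1 - Real.sqrt ε) / (2 * Real.sin (A / 2) ^ 2) = 1 by
        rw [hident, hcosA, ← hs]
        exact div_self (by linarith)]
      rw [Real.one_rpow, mul_one]
    · rintro y ⟨x, hxmem, rfl⟩
      exact main x hxmem
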